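/- Let A be a convex acceptance set with nonempty interior in an ordered locally convex space X, and S a traded asset such that ρ_{A,S} does not attain −∞. If ρ_{A,S} is finitely valued on a dense linear subspace of X, then ρ_{A,S} is finitely valued (and continuous) on all of X. -/

import Mathlib

open Filter Topology

variable {X : Type*} [AddCommGroup X] [Module ℝ X] [PartialOrder X]
  [CovariantClass X X (· + ·) (· ≤ ·)] [PosSMulMono ℝ X]
  [TopologicalSpace X] [IsTopologicalAddGroup X] [ContinuousSMul ℝ X]

/-- The risk measure `ρ_{A,S}(x) = inf {m : x + (m/S₀)·S_T ∈ A}`, valued in `EReal`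
(with `inf ∅ = ⊤` and unbounded-below giving `⊥`). -/
noncomputable def rho (A : Set X) (S0 : ℝ) (ST : X) (x : X) : EReal :=
  sInf ((fun r : ℝ => (r : EReal)) '' {r : ℝ | x + (r / S0) • ST ∈ A})

/-- A set is monotone if it contains, with any element, every larger element. -/
def MonotoneSet (A : Set X) : Prop := ∀ x ∈ A, ∀ y, x ≤ y → y ∈ A

/-- An acceptance set: nonempty, proper, and monotone. -/
def AcceptanceSet (A : Set X) : Prop := A.Nonempty ∧ A ≠ Set.univ ∧ MonotoneSet A

/-- The algebraic core (algebraic interior) of a set. -/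
def algCore (A : Set X) : Set X :=
  {x | ∀ y : X, ∃ ε > 0, ∀ l : ℝ, |l| < ε → x + l • y ∈ A}

/-- The hitting set of the risk measure. -/
def hit (A : Set X) (S0 : ℝ) (ST : X) (x : X) : Set ℝ :=
  {r : ℝ | x + (r / S0) • ST ∈ A}

lemma rho_def' (A : Set X) (S0 : ℝ) (ST : X) (x : X) :
    rho A S0 ST x = sInf ((fun r : ℝ => (r : EReal)) '' hit A S0 ST x) := rfl

lemma hit_nonempty_of_ne_top {A : Set X} {S0 : ℝ} {ST : X} {x : X}
    (h : rho A S0 ST x ≠ ⊤) : (hit A S0 ST x).Nonempty := by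
  by_contra hne
  rw [Set.not_nonempty_iff_eq_empty] at hne
  apply h
  rw [rho_def', hne]
  simp

lemma hit_bddBelow {A : Set X} {S0 : ℝ} {ST : X} {x : X}
    (h : rho A S0 ST x ≠ ⊥) : BddBelow (hit A S0 ST x) := by
  by_contra hb
  apply h
  rw [rho_def', sInf_eq_bot]
  intro b hb'
  induction b using EReal.rec with
  | bot => exact absurd hb' (lt_irrefl _)
  | coe q =>
      obtain ⟨r, hr, hlt⟩ := not_bddBelow_iff.mp hb q
      exact ⟨(r : EReal), ⟨r, hr, rfl⟩, by exact_mod_cast hlt⟩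
  | top =>
      obtain ⟨r, hr, _⟩ := not_bddBelow_iff.mp hb 0
      exact ⟨(r : EReal), ⟨r, hr, rfl⟩, EReal.coe_lt_top r⟩

lemma rho_eq_coe_sInf {A : Set X} {S0 : ℝ} {ST : X} {x : X}
    (hne : (hit A S0 ST x).Nonempty) (hbd : BddBelow (hit A S0 ST x)) :
    rho A S0 ST x = ((sInf (hit A S0 ST x) : ℝ) : EReal) := by
  rw [rho_def']
  exact (Monotone.map_csInf_of_continuousAt (continuous_coe_real_ereal.continuousAt)
    (fun a b h => EReal.coe_le_coe_iff.mpr h) hne hbd).symm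

/-- Combination lemma for hitting sets, from convexity of `A`. -/
lemma hit_combo {A : Set X} {S0 : ℝ} {ST : X} (hconv : Convex ℝ A) (hS0 : S0 ≠ 0)
    {x y : X} {r r' a b : ℝ} (ha : 0 ≤ a) (hb : 0 ≤ b) (hab : a + b = 1)
    (hx : r ∈ hit A S0 ST x) (hy : r' ∈ hit A S0 ST y) :
    a * r + b * r' ∈ hit A S0 ST (a • x + b • y) := by
  have h := hconv hx hy ha hb hab
  have heq : a • (x + (r / S0) • ST) + b • (y + (r' / S0) • ST)
      = (a • x + b • y) + ((a * r + b * r') / S0) • ST := by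
    rw [div_eq_mul_inv, div_eq_mul_inv, div_eq_mul_inv]
    module
  rwa [heq] at h

/-- The hitting set is nonempty everywhere, from finiteness on a dense subspace. -/
lemma hit_nonempty_all {A : Set X} {S0 : ℝ} {ST : X}
    (hconv : Convex ℝ A) (hint : (interior A).Nonempty)
    (S : Submodule ℝ X) (hdense : Dense (S : Set X))
    (hfin : ∀ x ∈ S, rho A S0 ST x ≠ ⊤) (x : X) : (hit A S0 ST x).Nonempty := by
  obtain ⟨x₀, hx₀⟩ := hint
  set p : X := (2 : ℝ) • x - x₀ with hp
  have hopen : IsOpen {s : X | x₀ + p - s ∈ interior A} :=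
    isOpen_interior.preimage (by fun_prop)
  have hone : {s : X | x₀ + p - s ∈ interior A}.Nonempty := ⟨p, by simpa using hx₀⟩
  obtain ⟨s, hsS, hs⟩ := hdense.exists_mem_open hopen hone
  obtain ⟨c, hc⟩ := hit_nonempty_of_ne_top (hfin s hsS)
  refine ⟨c / 2, ?_⟩
  have hw : x₀ + p - s ∈ A := interior_subset hs
  have h := hconv hw hc (by norm_num : (0:ℝ) ≤ 1/2) (by norm_num : (0:ℝ) ≤ 1/2)
    (by norm_num : (1/2 : ℝ) + 1/2 = 1)
  have heq : (1/2 : ℝ) • (x₀ + p - s) + (1/2 : ℝ) • (s + (c / S0) • ST)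
      = x + ((c / 2) / S0) • ST := by
    rw [hp]
    match_scalars <;> (field_simp; try ring)
  rwa [heq] at h

theorem rho_finite_of_finite_on_dense_subspace [LocallyConvexSpace ℝ X]
    (A : Set X) (S0 : ℝ) (ST : X)
    (hA : AcceptanceSet A) (hconv : Convex ℝ A) (hint : (interior A).Nonempty)
    (hS0 : 0 < S0) (hST : 0 ≤ ST) (hSTne : ST ≠ 0)
    (hnobot : ∀ x : X, rho A S0 ST x ≠ ⊥)
    (S : Submodule ℝ X) (hdense : Dense (S : Set X))
    (hfin : ∀ x ∈ S, rho A S0 ST x ≠ ⊤) :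
    (∀ x : X, rho A S0 ST x ≠ ⊤) ∧ Continuous (rho A S0 ST) := by
  have hne : ∀ x : X, (hit A S0 ST x).Nonempty :=
    hit_nonempty_all hconv hint S hdense hfin
  have hbd : ∀ x : X, BddBelow (hit A S0 ST x) := fun x => hit_bddBelow (hnobot x)
  set R : X → ℝ := fun x => sInf (hit A S0 ST x) with hR
  have hrho : ∀ x : X, rho A S0 ST x = ((R x : ℝ) : EReal) :=
    fun x => rho_eq_coe_sInf (hne x) (hbd x)
  -- convexity inequality for R
  have hconvR : ∀ (a b : ℝ), 0 ≤ a → 0 ≤ b → a + b = 1 → ∀ x y : X,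
      R (a • x + b • y) ≤ a * R x + b * R y := by
    intro a b ha hb hab x y
    by_contra hlt
    push_neg at hlt
    set ε : ℝ := (R (a • x + b • y) - (a * R x + b * R y)) / 2 with hε
    have hεpos : 0 < ε := by simp only [hε]; linarith
    obtain ⟨r, hr, hrlt⟩ := Real.lt_sInf_add_pos (hne x) hεpos
    obtain ⟨r', hr', hrlt'⟩ := Real.lt_sInf_add_pos (hne y) hεpos
    have hmem := hit_combo hconv hS0.ne' ha hb hab hr hr'
    have h1 : R (a • x + b • y) ≤ a * r + b * r' := csInf_le (hbd _) hmem
    have h2 : a * r ≤ a * (R x + ε) := mul_le_mul_of_nonneg_left hrlt.le ha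
    have h3 : b * r' ≤ b * (R y + ε) := mul_le_mul_of_nonneg_left hrlt'.le hb
    have : a * (R x + ε) + b * (R y + ε) = a * R x + b * R y + ε := by
      have : a * ε + b * ε = ε := by rw [← add_mul, hab, one_mul]
      ring_nf
      nlinarith [this]
    nlinarith [h1, h2, h3]
  -- R ≤ 0 on A
  have hR_le_zero : ∀ y ∈ A, R y ≤ 0 := by
    intro y hy
    refine csInf_le (hbd y) ?_
    show y + ((0:ℝ) / S0) • ST ∈ A
    simpa using hy
  -- bounded above near every point
  obtain ⟨x₀, hx₀⟩ := hint
  have hbdd_near : ∀ x : X, ∃ V ∈ 𝓝 (0 : X), ∃ M : ℝ, ∀ u ∈ V, R (x + u) ≤ M := by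
    intro x
    -- V = {u | 2u ∈ interior A - x₀}
    have hU : {u : X | x₀ + (2:ℝ) • u ∈ interior A} ∈ 𝓝 (0 : X) := by
      have hcont : Continuous fun u : X => x₀ + (2:ℝ) • u := by fun_prop
      have h1 : interior A ∈ 𝓝 (x₀ + (2:ℝ) • (0:X)) := by
        rw [smul_zero, add_zero]; exact isOpen_interior.mem_nhds hx₀
      exact (hcont.continuousAt (x := 0)).preimage_mem_nhds h1
    refine ⟨_, hU, (1/2) * R ((2:ℝ) • x - x₀), ?_⟩
    intro u hu
    have hmem : x₀ + (2:ℝ) • u ∈ A := interior_subset hu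
    have hcombo := hconvR (1/2) (1/2) (by norm_num) (by norm_num) (by norm_num)
      (x₀ + (2:ℝ) • u) ((2:ℝ) • x - x₀)
    have heq : (1/2 : ℝ) • (x₀ + (2:ℝ) • u) + (1/2 : ℝ) • ((2:ℝ) • x - x₀) = x + u := by
      module
    rw [heq] at hcombo
    have := hR_le_zero _ hmem
    linarith
  -- continuity of R
  have hcontR : Continuous R := by
    rw [continuous_iff_continuousAt]
    intro x
    obtain ⟨V, hV, M, hM⟩ := hbdd_near x
    -- symmetrize V
    set W : Set X := V ∩ (-V) with hW
    have hWnhds : W ∈ 𝓝 (0 : X) := by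
      refine Filter.inter_mem hV ?_
      simpa using (continuous_neg.continuousAt (x := (0:X))).preimage_mem_nhds
        (by simpa using hV)
    have hMW : ∀ w ∈ W, R (x + w) ≤ M ∧ R (x - w) ≤ M := by
      intro w hw
      refine ⟨hM w hw.1, ?_⟩
      have : -w ∈ V := hw.2
      simpa [sub_eq_add_neg] using hM (-w) this
    -- M ≥ R x (since 0 ∈ W)
    have h0W : (0 : X) ∈ W := mem_of_mem_nhds hWnhds
    have hMx : R x ≤ M := by simpa using (hMW 0 h0W).1
    set K : ℝ := M - R x with hK
    have hK0 : 0 ≤ K := by simp only [hK]; linarith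
    -- key estimate
    have hkey : ∀ t : ℝ, 0 < t → t ≤ 1 → ∀ w ∈ W, |R (x + t • w) - R x| ≤ t * K := by
      intro t ht ht1 w hw
      obtain ⟨hw1, hw2⟩ := hMW w hw
      -- upper bound
      have hup : R (x + t • w) ≤ R x + t * K := by
        have hcombo := hconvR (1 - t) t (by linarith) ht.le (by ring) x (x + w)
        have heq : (1 - t) • x + t • (x + w) = x + t • w := by module
        rw [heq] at hcombo
        have : (1 - t) * R x + t * R (x + w) ≤ (1 - t) * R x + t * M :=
          by nlinarith [hw1]
        simp only [hK]; nlinarith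
      -- lower bound
      have hlow : R x - t * K ≤ R (x + t • w) := by
        have h1t : (0:ℝ) < 1 + t := by linarith
        have hcombo := hconvR (1 / (1 + t)) (t / (1 + t))
          (by positivity) (by positivity)
          (by field_simp) (x + t • w) (x - w)
        have heq : (1 / (1 + t)) • (x + t • w) + (t / (1 + t)) • (x - w) = x := by
          rw [div_eq_mul_inv, div_eq_mul_inv]
          match_scalars <;> (field_simp; try ring)
        rw [heq] at hcombo
        have h2 : (t / (1 + t)) * R (x - w) ≤ (t / (1 + t)) * M :=
          mul_le_mul_of_nonneg_left hw2 (by positivity)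
        have h3 : R x ≤ (1 / (1 + t)) * R (x + t • w) + (t / (1 + t)) * M := by linarith
        have h4 : (1 + t) * R x ≤ R (x + t • w) + t * M := by
          have := mul_le_mul_of_nonneg_left h3 h1t.le
          calc (1 + t) * R x ≤ (1 + t) * ((1 / (1 + t)) * R (x + t • w)
                + (t / (1 + t)) * M) := this
            _ = R (x + t • w) + t * M := by field_simp; try ring
        simp only [hK]; nlinarith
      rw [abs_sub_le_iff]
      constructor <;> linarith
    -- conclude continuity at x
    rw [ContinuousAt, Metric.tendsto_nhds]
    intro ε hε
    set t : ℝ := min 1 (ε / (2 * (K + 1))) with htdef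
    have htpos : 0 < t := by
      apply lt_min one_pos
      positivity
    have ht1 : t ≤ 1 := min_le_left _ _
    have htK : t * K < ε := by
      have h1 : t ≤ ε / (2 * (K + 1)) := min_le_right _ _
      have h2 : t * K ≤ (ε / (2 * (K + 1))) * K :=
        mul_le_mul_of_nonneg_right h1 hK0
      have h3 : (ε / (2 * (K + 1))) * K < ε := by
        rw [div_mul_eq_mul_div, div_lt_iff₀ (by positivity)]
        nlinarith
      exact h2.trans_lt h3
    -- the neighborhood : preimage of W under y ↦ t⁻¹ • (y - x)
    have hnbhd : {y : X | t⁻¹ • (y - x) ∈ W} ∈ 𝓝 x := by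
      have hcont : Continuous fun y : X => t⁻¹ • (y - x) := by fun_prop
      have h1 : W ∈ 𝓝 (t⁻¹ • (x - x)) := by
        rw [sub_self, smul_zero]; exact hWnhds
      exact (hcont.continuousAt (x := x)).preimage_mem_nhds h1
    refine Filter.eventually_iff_exists_mem.mpr ⟨_, hnbhd, ?_⟩
    intro y hy
    set w : X := t⁻¹ • (y - x) with hwdef
    have hyeq : y = x + t • w := by
      rw [hwdef, smul_smul, mul_inv_cancel₀ htpos.ne', one_smul]
      abel
    have := hkey t htpos ht1 w hy
    rw [Real.dist_eq, hyeq]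
    calc |R (x + t • w) - R x| ≤ t * K := this
      _ < ε := htK
  refine ⟨fun x => by rw [hrho x]; exact EReal.coe_ne_top _, ?_⟩
  have : rho A S0 ST = fun x => ((R x : ℝ) : EReal) := funext hrho
  rw [this]
  exact continuous_coe_real_ereal.comp hcontR
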